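/- Fix real numbers α ≠ 0 and β, and real numbers a₁,…,a₆ and X₁,…,X₆. Let g be the 7×7 matrix with rows (1, 0, −(α/2)a₁, −(α/2)a₂, (α/2)a₃, (α/2)a₄, a₅), (0, 1, 0, 0, −(β/2)a₂, (β/2)a₁, a₆), (0, 0, 1, 0, 0, 0, a₃), (0, 0, 0, 1, 0, 0, a₄), (0, 0, 0, 0, 1, 0, a₁), (0, 0, 0, 0, 0, 1, a₂), (0, 0, 0, 0, 0, 0, 1), and let F be the 7×7 matrix whose only nonzero entries are in the last row, equal to (X₅, X₆, X₃, X₄, X₁, X₂, 0). Then g is invertible, and the first six entries of the last row of g F g⁻¹ are (X₅′, X₆′, X₃′, X₄′, X₁′, X₂′), where X₁′ = X₁ − (α/2)a₃X₅ + (β/2)a₂X₆, X₂′ = X₂ − (α/2)a₄X₅ − (β/2)a₁X₆, X₃′ = X₃ + (α/2)a₁X₅, X₄′ = X₄ + (α/2)a₂X₅, X₅′ = X₅, and X₆′ = X₆. -/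
import Mathlib


noncomputable section

/-- The group element of the noncommutative Weyl–Heisenberg group as a 7×7 matrix,
with parameters `a₁, …, a₆` and extension parameters `α`, `β`. -/
def gMat (α β a₁ a₂ a₃ a₄ a₅ a₆ : ℝ) : Matrix (Fin 7) (Fin 7) ℝ :=
  !![1, 0, -(α / 2) * a₁, -(α / 2) * a₂, (α / 2) * a₃, (α / 2) * a₄, a₅;
     0, 1, 0, 0, -(β / 2) * a₂, (β / 2) * a₁, a₆;
     0, 0, 1, 0, 0, 0, a₃;
     0, 0, 0, 1, 0, 0, a₄;
     0, 0, 0, 0, 1, 0, a₁;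
     0, 0, 0, 0, 0, 1, a₂;
     0, 0, 0, 0, 0, 0, 1]

/-- The dual Lie algebra element `F` as a 7×7 matrix whose only nonzero entries are
in the last row, equal to `(X₅, X₆, X₃, X₄, X₁, X₂, 0)`. -/
def FMat (X₁ X₂ X₃ X₄ X₅ X₆ : ℝ) : Matrix (Fin 7) (Fin 7) ℝ :=
  !![0, 0, 0, 0, 0, 0, 0;
     0, 0, 0, 0, 0, 0, 0;
     0, 0, 0, 0, 0, 0, 0;
     0, 0, 0, 0, 0, 0, 0;
     0, 0, 0, 0, 0, 0, 0;
     0, 0, 0, 0, 0, 0, 0;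
     X₅, X₆, X₃, X₄, X₁, X₂, 0]

@[simp] lemma consVal_2_1 {α : Type*} (x : α) (u : Fin 1 → α) :
    Matrix.vecCons x u (1 : Fin 2) = u (0 : Fin 1) := rfl
@[simp] lemma consVal_3_1 {α : Type*} (x : α) (u : Fin 2 → α) :
    Matrix.vecCons x u (1 : Fin 3) = u (0 : Fin 2) := rfl
@[simp] lemma consVal_3_2 {α : Type*} (x : α) (u : Fin 2 → α) :
    Matrix.vecCons x u (2 : Fin 3) = u (1 : Fin 2) := rfl
@[simp] lemma consVal_4_1 {α : Type*} (x : α) (u : Fin 3 → α) :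
    Matrix.vecCons x u (1 : Fin 4) = u (0 : Fin 3) := rfl
@[simp] lemma consVal_4_2 {α : Type*} (x : α) (u : Fin 3 → α) :
    Matrix.vecCons x u (2 : Fin 4) = u (1 : Fin 3) := rfl
@[simp] lemma consVal_4_3 {α : Type*} (x : α) (u : Fin 3 → α) :
    Matrix.vecCons x u (3 : Fin 4) = u (2 : Fin 3) := rfl
@[simp] lemma consVal_5_1 {α : Type*} (x : α) (u : Fin 4 → α) :
    Matrix.vecCons x u (1 : Fin 5) = u (0 : Fin 4) := rfl
@[simp] lemma consVal_5_2 {α : Type*} (x : α) (u : Fin 4 → α) :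
    Matrix.vecCons x u (2 : Fin 5) = u (1 : Fin 4) := rfl
@[simp] lemma consVal_5_3 {α : Type*} (x : α) (u : Fin 4 → α) :
    Matrix.vecCons x u (3 : Fin 5) = u (2 : Fin 4) := rfl
@[simp] lemma consVal_5_4 {α : Type*} (x : α) (u : Fin 4 → α) :
    Matrix.vecCons x u (4 : Fin 5) = u (3 : Fin 4) := rfl
@[simp] lemma consVal_6_1 {α : Type*} (x : α) (u : Fin 5 → α) :
    Matrix.vecCons x u (1 : Fin 6) = u (0 : Fin 5) := rfl
@[simp] lemma consVal_6_2 {α : Type*} (x : α) (u : Fin 5 → α) :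
    Matrix.vecCons x u (2 : Fin 6) = u (1 : Fin 5) := rfl
@[simp] lemma consVal_6_3 {α : Type*} (x : α) (u : Fin 5 → α) :
    Matrix.vecCons x u (3 : Fin 6) = u (2 : Fin 5) := rfl
@[simp] lemma consVal_6_4 {α : Type*} (x : α) (u : Fin 5 → α) :
    Matrix.vecCons x u (4 : Fin 6) = u (3 : Fin 5) := rfl
@[simp] lemma consVal_6_5 {α : Type*} (x : α) (u : Fin 5 → α) :
    Matrix.vecCons x u (5 : Fin 6) = u (4 : Fin 5) := rfl
@[simp] lemma consVal_7_1 {α : Type*} (x : α) (u : Fin 6 → α) :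
    Matrix.vecCons x u (1 : Fin 7) = u (0 : Fin 6) := rfl
@[simp] lemma consVal_7_2 {α : Type*} (x : α) (u : Fin 6 → α) :
    Matrix.vecCons x u (2 : Fin 7) = u (1 : Fin 6) := rfl
@[simp] lemma consVal_7_3 {α : Type*} (x : α) (u : Fin 6 → α) :
    Matrix.vecCons x u (3 : Fin 7) = u (2 : Fin 6) := rfl
@[simp] lemma consVal_7_4 {α : Type*} (x : α) (u : Fin 6 → α) :
    Matrix.vecCons x u (4 : Fin 7) = u (3 : Fin 6) := rfl
@[simp] lemma consVal_7_5 {α : Type*} (x : α) (u : Fin 6 → α) :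
    Matrix.vecCons x u (5 : Fin 7) = u (4 : Fin 6) := rfl
@[simp] lemma consVal_7_6 {α : Type*} (x : α) (u : Fin 6 → α) :
    Matrix.vecCons x u (6 : Fin 7) = u (5 : Fin 6) := rfl

set_option maxHeartbeats 4000000 in
/-- The coadjoint action of the noncommutative Weyl–Heisenberg group: `g` is
invertible, and the first six entries of the last row of `g F g⁻¹` are
`(X₅′, X₆′, X₃′, X₄′, X₁′, X₂′)` with `X₁′ = X₁ − (α/2)a₃X₅ + (β/2)a₂X₆`,
`X₂′ = X₂ − (α/2)a₄X₅ − (β/2)a₁X₆`, `X₃′ = X₃ + (α/2)a₁X₅`, `X₄′ = X₄ + (α/2)a₂X₅`,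
`X₅′ = X₅`, `X₆′ = X₆`. -/
theorem coadjoint_action (α β : ℝ) (hα : α ≠ 0) (a₁ a₂ a₃ a₄ a₅ a₆ X₁ X₂ X₃ X₄ X₅ X₆ : ℝ) :
    IsUnit (gMat α β a₁ a₂ a₃ a₄ a₅ a₆) ∧
    (gMat α β a₁ a₂ a₃ a₄ a₅ a₆ * FMat X₁ X₂ X₃ X₄ X₅ X₆ *
        (gMat α β a₁ a₂ a₃ a₄ a₅ a₆)⁻¹) 6 0 = X₅ ∧
    (gMat α β a₁ a₂ a₃ a₄ a₅ a₆ * FMat X₁ X₂ X₃ X₄ X₅ X₆ *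
        (gMat α β a₁ a₂ a₃ a₄ a₅ a₆)⁻¹) 6 1 = X₆ ∧
    (gMat α β a₁ a₂ a₃ a₄ a₅ a₆ * FMat X₁ X₂ X₃ X₄ X₅ X₆ *
        (gMat α β a₁ a₂ a₃ a₄ a₅ a₆)⁻¹) 6 2 = X₃ + (α / 2) * a₁ * X₅ ∧
    (gMat α β a₁ a₂ a₃ a₄ a₅ a₆ * FMat X₁ X₂ X₃ X₄ X₅ X₆ *
        (gMat α β a₁ a₂ a₃ a₄ a₅ a₆)⁻¹) 6 3 = X₄ + (α / 2) * a₂ * X₅ ∧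
    (gMat α β a₁ a₂ a₃ a₄ a₅ a₆ * FMat X₁ X₂ X₃ X₄ X₅ X₆ *
        (gMat α β a₁ a₂ a₃ a₄ a₅ a₆)⁻¹) 6 4
      = X₁ - (α / 2) * a₃ * X₅ + (β / 2) * a₂ * X₆ ∧
    (gMat α β a₁ a₂ a₃ a₄ a₅ a₆ * FMat X₁ X₂ X₃ X₄ X₅ X₆ *
        (gMat α β a₁ a₂ a₃ a₄ a₅ a₆)⁻¹) 6 5
      = X₂ - (α / 2) * a₄ * X₅ - (β / 2) * a₁ * X₆ := by
  have hmul : gMat α β a₁ a₂ a₃ a₄ a₅ a₆ *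
      gMat α β (-a₁) (-a₂) (-a₃) (-a₄) (-a₅) (-a₆) = 1 := by
    ext i j
    fin_cases i <;> fin_cases j <;>
      simp [gMat, Matrix.mul_apply, Fin.sum_univ_succ] <;> ring
  have hinv : (gMat α β a₁ a₂ a₃ a₄ a₅ a₆)⁻¹ =
      gMat α β (-a₁) (-a₂) (-a₃) (-a₄) (-a₅) (-a₆) :=
    Matrix.inv_eq_right_inv hmul
  refine ⟨(Matrix.isUnit_iff_isUnit_det _).2 (Matrix.isUnit_det_of_right_inverse hmul), ?_, ?_, ?_, ?_, ?_, ?_⟩ <;>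
    rw [hinv] <;>
    simp [gMat, FMat, Matrix.mul_apply, Fin.sum_univ_succ] <;> ring
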